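/- arXiv:1710.11093 — 3 statements merged into one kernel-verified Lean document; each statement's English description precedes it below -/
import Mathlib

section
/- There exists a Parseval frame $\{\varphi_j\}_{j\in\mathbb{N}}$ of $\mathbb{R}$ (namely $\varphi_1=\varphi_2=\varphi_3=0$ and $\varphi_{j+3}=f_j$ where $f_j > 0$, $\sum_j f_j^2 = 1$, $\sum_j f_j = +\infty$) such that, with $D$ its analysis operator and $\Delta=\{1,2,3\}$ (so that $\mathcal{W}=\{0\}$), the operator $DD^*$ is unbounded from $\ell^\infty$ to $\ell^\infty$: $\sup_x \|DD^*x\|_\infty / \|x\|_\infty = +\infty$. -/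
open Filter Finset

/-- There is a Parseval frame `{φ j}` of `ℝ` (with `φ 0 = φ 1 = φ 2 = 0` and `φ (j+3) = f j`,
`f j > 0`, `∑ f j ^ 2 = 1`, `∑ f j = ∞`) whose synthesis-analysis operator `D D^*`,
`(D D^* x) i = φ i * ∑ j, x j * φ j`, is unbounded from `ℓ^∞` to `ℓ^∞`. -/
theorem exists_parseval_frame_DDstar_unbounded :
    ∃ φ : ℕ → ℝ,
      (φ 0 = 0 ∧ φ 1 = 0 ∧ φ 2 = 0) ∧
      (∀ j, 3 ≤ j → 0 < φ j) ∧
      (∑' j : ℕ, φ j ^ 2 = 1) ∧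
      ¬ Summable φ ∧
      -- Parseval frame property of `{φ j}` for the Hilbert space `ℝ`
      (∀ g : ℝ, ∑' j : ℕ, ‖g * φ j‖ ^ 2 = ‖g‖ ^ 2) ∧
      -- `D D^*` is unbounded from `ℓ^∞` to `ℓ^∞`: on finitely supported inputs of
      -- sup-norm at most 1 its output sup-norm is arbitrarily large
      (∀ C : ℝ, ∃ x : ℕ →₀ ℝ, (∀ j, |x j| ≤ 1) ∧
        ∃ i : ℕ, C < |φ i * (x.sum fun j v => v * φ j)|) := by
  -- the auxiliary sequence `u j = 1/(j+1)`
  set u : ℕ → ℝ := fun j => 1 / ((j : ℝ) + 1) with hu_def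
  have hu_pos : ∀ j, 0 < u j := fun j => by positivity
  have hu_sq_summable : Summable fun j => u j ^ 2 := by
    have h1 : Summable fun j : ℕ => 1 / ((j : ℝ)) ^ 2 :=
      Real.summable_one_div_nat_pow.mpr (by norm_num)
    have h2 := (summable_nat_add_iff 1).mpr h1
    refine h2.congr fun j => ?_
    simp [hu_def, div_pow]
  set S : ℝ := ∑' j, u j ^ 2 with hS_def
  have hS_pos : 0 < S :=
    Summable.tsum_pos hu_sq_summable (fun j => sq_nonneg _) 0 (by positivity)
  set c : ℝ := (Real.sqrt S)⁻¹ with hc_def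
  have hc_pos : 0 < c := by positivity
  have hc_sq : c ^ 2 = S⁻¹ := by
    rw [hc_def, inv_pow, Real.sq_sqrt hS_pos.le]
  set φ : ℕ → ℝ := fun j => if j < 3 then 0 else c / ((j : ℝ) - 2) with hφ_def
  have hφ_shift : ∀ j : ℕ, φ (j + 3) = c * u j := by
    intro j
    have h3 : ¬ (j + 3 < 3) := by omega
    simp only [hφ_def, h3, if_false]
    push_cast
    rw [hu_def]
    ring_nf
  have hφ_sq_summable : Summable fun j => φ j ^ 2 := by
    rw [← summable_nat_add_iff 3]
    refine ((hu_sq_summable.mul_left (c ^ 2)).congr fun j => ?_)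
    rw [hφ_shift, mul_pow]
  have htsum : ∑' j, φ j ^ 2 = 1 := by
    rw [← Summable.sum_add_tsum_nat_add 3 hφ_sq_summable]
    have h1 : ∑ i ∈ range 3, φ i ^ 2 = 0 := by
      simp [hφ_def, Finset.sum_range_succ]
    have h2 : ∑' j, φ (j + 3) ^ 2 = c ^ 2 * S := by
      rw [← tsum_mul_left]
      exact tsum_congr fun j => by rw [hφ_shift, mul_pow]
    rw [h1, h2, hc_sq, zero_add, inv_mul_cancel₀ hS_pos.ne']
  refine ⟨φ, ⟨by simp [hφ_def], by simp [hφ_def], by simp [hφ_def]⟩, ?_, htsum, ?_, ?_, ?_⟩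
  · -- positivity
    intro j hj
    show (if j < 3 then 0 else c / ((j : ℝ) - 2)) > 0
    rw [if_neg (by omega)]
    have h1 : (2 : ℝ) < (j : ℝ) := by exact_mod_cast by omega
    have h2 : (0:ℝ) < (j : ℝ) - 2 := by linarith
    positivity
  · -- not summable
    intro hsum
    have h1 : Summable fun j => φ (j + 3) := (summable_nat_add_iff 3).mpr hsum
    have h2 : Summable u := by
      have := h1.mul_left c⁻¹
      refine this.congr fun j => ?_
      rw [hφ_shift, ← mul_assoc, inv_mul_cancel₀ hc_pos.ne', one_mul]
    have h3 : Summable fun j : ℕ => 1 / (j : ℝ) := by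
      rw [← summable_nat_add_iff 1]
      refine h2.congr fun j => ?_
      simp [hu_def]
    exact Real.not_summable_one_div_natCast h3
  · -- Parseval
    intro g
    have h : ∀ j, ‖g * φ j‖ ^ 2 = g ^ 2 * φ j ^ 2 := fun j => by
      rw [Real.norm_eq_abs, abs_mul, mul_pow, sq_abs, sq_abs]
    calc ∑' j, ‖g * φ j‖ ^ 2 = ∑' j, g ^ 2 * φ j ^ 2 := tsum_congr h
      _ = g ^ 2 * ∑' j, φ j ^ 2 := tsum_mul_left
      _ = ‖g‖ ^ 2 := by rw [htsum, mul_one, Real.norm_eq_abs, sq_abs]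
  · -- unboundedness
    intro C
    obtain ⟨N, hN⟩ := (Real.tendsto_sum_range_one_div_nat_succ_atTop.eventually_gt_atTop
      (C / c ^ 2)).exists
    set x : ℕ →₀ ℝ := Finsupp.onFinset (range (N + 3))
      (fun j => if 3 ≤ j ∧ j < N + 3 then (1 : ℝ) else 0)
      (fun j hj => by
        simp only [Finset.mem_range]
        by_contra h
        push_neg at h
        exact hj (if_neg (by omega))) with hx_def
    refine ⟨x, ?_, 3, ?_⟩
    · intro j
      simp only [hx_def, Finsupp.onFinset_apply]
      split <;> norm_num
    · have hsum : (x.sum fun j v => v * φ j) = c * ∑ i ∈ range N, u i := by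
        rw [Finsupp.sum_of_support_subset x Finsupp.support_onFinset_subset _
          (fun i _ => by simp)]
        have hterm : ∀ j ∈ range (N + 3), x j * φ j = φ j := by
          intro j hj
          simp only [hx_def, Finsupp.onFinset_apply]
          rcases lt_or_ge j 3 with h | h
          · rw [if_neg (by omega)]
            simp [hφ_def, h]
          · rw [if_pos ⟨h, Finset.mem_range.mp hj⟩, one_mul]
        rw [Finset.sum_congr rfl hterm]
        have hsplit := Finset.sum_range_add φ 3 N
        rw [add_comm 3 N] at hsplit
        rw [hsplit]
        have h0 : ∑ i ∈ range 3, φ i = 0 := by simp [hφ_def, Finset.sum_range_succ]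
        rw [h0, zero_add, Finset.mul_sum]
        exact Finset.sum_congr rfl fun i _ => by rw [add_comm 3 i, hφ_shift]
      have hφ3 : φ 3 = c := by norm_num [hφ_def]
      rw [hφ3, hsum, ← mul_assoc, ← sq]
      have hpos : (0:ℝ) ≤ ∑ i ∈ range N, u i :=
        Finset.sum_nonneg fun i _ => (hu_pos i).le
      rw [abs_of_nonneg (by positivity)]
      have hlt := (div_lt_iff₀ (by positivity : (0:ℝ) < c ^ 2)).mp hN
      calc C < (∑ i ∈ range N, 1 / ((i:ℝ) + 1)) * c ^ 2 := hlt
        _ = c ^ 2 * ∑ i ∈ range N, u i := by rw [mul_comm]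
end

section
/- Let $m, N, s_1,\dots,s_N \in \mathbb{N}$ with $m \le N$, and let $\upsilon \ge 2m^2$. Let $(n'_1,\dots,n'_N)$ follow the multivariate hypergeometric distribution arising from drawing $m$ elements without replacement from a population with $\upsilon s_l$ copies of element $l$, and let $(n_1,\dots,n_N)$ follow the multinomial distribution with $m$ trials and probabilities $p_l = s_l/(s_1+\dots+s_N)$. Then for every $k_1,\dots,k_N \in \mathbb{N}\cup\{0\}$ with $k_1+\dots+k_N = m$, $\mathbb{P}(n'_1=k_1,\dots,n'_N=k_N) \ge \tfrac{1}{2}\,\mathbb{P}(n_1=k_1,\dots,n_N=k_N)$. -/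
/-- Comparison of sampling without replacement (multivariate hypergeometric) and
with replacement (multinomial): if `υ ≥ 2m²`, then for every `k` with `∑ k = m`,
the hypergeometric probability is at least half of the multinomial probability. -/
theorem hypergeometric_ge_half_multinomial
    (N m υ : ℕ) (hmN : m ≤ N) (s : Fin N → ℕ) (hs : ∀ l, 0 < s l)
    (hυ : 2 * m ^ 2 ≤ υ)
    (k : Fin N → ℕ) (hk : ∑ l : Fin N, k l = m) :
    ((1 : ℝ) / 2) *
        ((m.factorial : ℝ) * ∏ l : Fin N,
          ((s l : ℝ) / (∑ i : Fin N, (s i : ℝ))) ^ k l / (k l).factorial)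
      ≤ (∏ l : Fin N, ((υ * s l).choose (k l) : ℝ)) /
          ((υ * ∑ l : Fin N, s l).choose m : ℝ) := by
  rcases Nat.eq_zero_or_pos m with hm0 | hm
  · subst hm0
    have hk0 : ∀ l, k l = 0 := by
      intro l
      exact Finset.sum_eq_zero_iff.mp hk l (Finset.mem_univ l)
    simp [hk0]
    norm_num
  -- main case: m ≥ 1
  set S : ℕ := ∑ i : Fin N, s i with hSdef
  have hcastS : (∑ i : Fin N, (s i : ℝ)) = (S : ℝ) := by
    rw [hSdef]; push_cast; rfl
  rw [hcastS]
  have hN : 0 < N := lt_of_lt_of_le hm hmN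
  have hS0 : 0 < S := by
    have : Fin N := ⟨0, hN⟩
    exact Finset.sum_pos (fun i _ => hs i) ⟨this, Finset.mem_univ this⟩
  have hmυ : m ≤ υ := by nlinarith
  have hυ0 : 0 < υ := lt_of_lt_of_le hm hmυ
  have hkl : ∀ l, k l ≤ m := by
    intro l
    rw [← hk]
    exact Finset.single_le_sum (f := k) (fun i _ => Nat.zero_le _) (Finset.mem_univ l)
  have hmus : ∀ l, m ≤ υ * s l := fun l =>
    le_trans hmυ (Nat.le_mul_of_pos_right υ (hs l))
  have hυr : (0 : ℝ) < (υ : ℝ) := by exact_mod_cast hυ0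
  have hSr : (0 : ℝ) < (S : ℝ) := by exact_mod_cast hS0
  have hmr : (0 : ℝ) ≤ (m : ℝ) := Nat.cast_nonneg m
  -- rewrite choose as descFactorial / factorial
  have hchoose : ∀ n r : ℕ, (n.choose r : ℝ) = (n.descFactorial r : ℝ) / (r.factorial : ℝ) := by
    intro n r
    rw [eq_div_iff (Nat.cast_ne_zero.mpr r.factorial_ne_zero)]
    rw [show ((n.choose r : ℝ) * r.factorial = ((r.factorial * n.choose r : ℕ) : ℝ)) by
      push_cast; ring]
    rw [← Nat.descFactorial_eq_factorial_mul_choose]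
  simp only [hchoose]
  set P : ℝ := ∏ l : Fin N, (s l : ℝ) ^ k l with hP
  set K : ℝ := ∏ l : Fin N, ((k l).factorial : ℝ) with hK
  set F : ℝ := ∏ l : Fin N, (((υ * s l).descFactorial (k l) : ℕ) : ℝ) with hF
  set D : ℝ := (((υ * S).descFactorial m : ℕ) : ℝ) with hD
  have hK0 : 0 < K := Finset.prod_pos (fun l _ => by exact_mod_cast (k l).factorial_pos)
  have hP0 : 0 ≤ P := Finset.prod_nonneg (fun l _ => by positivity)
  have hD0 : 0 < D := by
    have : 0 < (υ * S).descFactorial m := by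
      rcases Nat.eq_zero_or_pos ((υ * S).descFactorial m) with h | h
      · exfalso
        have := Nat.descFactorial_eq_zero_iff_lt.mp h
        have : m ≤ υ * S := le_trans hmυ (Nat.le_mul_of_pos_right υ hS0)
        omega
      · exact h
    rw [hD]
    exact_mod_cast this
  have hfm0 : (0 : ℝ) < (m.factorial : ℝ) := by exact_mod_cast m.factorial_pos
  -- rewrite products
  have hL : (∏ l : Fin N, ((s l : ℝ) / (S : ℝ)) ^ k l / ((k l).factorial : ℝ))
      = (P / (S : ℝ) ^ m) / K := by
    rw [Finset.prod_div_distrib]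
    congr 1
    simp_rw [div_pow]
    rw [Finset.prod_div_distrib, Finset.prod_pow_eq_pow_sum, hk]
  have hR : (∏ l : Fin N, (((υ * s l).descFactorial (k l) : ℕ) : ℝ) / ((k l).factorial : ℝ))
      = F / K := Finset.prod_div_distrib _ _
  rw [hL, hR]
  -- the key inequality
  have hmdivυ : (m : ℝ) / υ ≤ 1 := by
    rw [div_le_one hυr]; exact_mod_cast hmυ
  have honesub : (0 : ℝ) ≤ 1 - (m : ℝ) / υ := by linarith
  have hBern : (1 : ℝ) ≤ 2 * (1 - (m : ℝ) / υ) ^ m := by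
    have hb : (1 : ℝ) + (m : ℝ) * (-((m : ℝ) / υ)) ≤ (1 + -((m : ℝ) / υ)) ^ m := by
      apply one_add_mul_le_pow
      linarith
    have hb' : (1 : ℝ) - (m : ℝ) ^ 2 / υ ≤ (1 - (m : ℝ) / υ) ^ m := by
      calc (1 : ℝ) - (m : ℝ) ^ 2 / υ = 1 + (m : ℝ) * (-((m : ℝ) / υ)) := by ring
        _ ≤ (1 + -((m : ℝ) / υ)) ^ m := hb
        _ = (1 - (m : ℝ) / υ) ^ m := by ring_nf
    have h2 : (m : ℝ) ^ 2 / υ ≤ 1 / 2 := by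
      rw [div_le_div_iff₀ hυr (by norm_num : (0:ℝ) < 2)]
      have : (2 * m ^ 2 : ℝ) ≤ (υ : ℝ) := by exact_mod_cast hυ
      linarith
    linarith
  have hD_le : D ≤ ((υ : ℝ) * (S : ℝ)) ^ m := by
    have := Nat.descFactorial_le_pow (υ * S) m
    rw [hD]
    calc (((υ * S).descFactorial m : ℕ) : ℝ) ≤ (((υ * S) ^ m : ℕ) : ℝ) := by exact_mod_cast this
      _ = ((υ : ℝ) * (S : ℝ)) ^ m := by push_cast; ring
  have hF_ge : (1 - (m : ℝ) / υ) ^ m * ((υ : ℝ) ^ m * P) ≤ F := by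
    have hterm : ∀ l : Fin N,
        ((υ : ℝ) * (s l : ℝ) * (1 - (m : ℝ) / υ)) ^ k l
          ≤ (((υ * s l).descFactorial (k l) : ℕ) : ℝ) := by
      intro l
      have hs1 : (1 : ℝ) ≤ (s l : ℝ) := by exact_mod_cast hs l
      have hstep1 : (υ : ℝ) * (s l : ℝ) * (1 - (m : ℝ) / υ) ≤ ((υ * s l - m : ℕ) : ℝ) := by
        have hc : ((υ * s l - m : ℕ) : ℝ) = (υ : ℝ) * (s l : ℝ) - (m : ℝ) := by
          rw [Nat.cast_sub (hmus l)]; push_cast; ring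
        rw [hc]
        have he : (υ : ℝ) * (s l : ℝ) * (1 - (m : ℝ) / υ)
            = (υ : ℝ) * (s l : ℝ) - (s l : ℝ) * (m : ℝ) := by
          field_simp
        rw [he]
        nlinarith
      have hstep2 : ((υ * s l - m : ℕ) : ℝ) ^ k l
          ≤ (((υ * s l).descFactorial (k l) : ℕ) : ℝ) := by
        have hnat : (υ * s l - m) ^ k l ≤ (υ * s l).descFactorial (k l) := by
          calc (υ * s l - m) ^ k l ≤ (υ * s l + 1 - k l) ^ k l := by
                apply Nat.pow_le_pow_left
                have := hkl l
                omega
            _ ≤ (υ * s l).descFactorial (k l) := Nat.pow_sub_le_descFactorial _ _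
        exact_mod_cast hnat
      calc ((υ : ℝ) * (s l : ℝ) * (1 - (m : ℝ) / υ)) ^ k l
          ≤ ((υ * s l - m : ℕ) : ℝ) ^ k l := by
            apply pow_le_pow_left₀ (by positivity) hstep1
        _ ≤ _ := hstep2
    have hprod : ∏ l : Fin N, ((υ : ℝ) * (s l : ℝ) * (1 - (m : ℝ) / υ)) ^ k l ≤ F := by
      apply Finset.prod_le_prod (fun l _ => by positivity) (fun l _ => hterm l)
    have heq : ∏ l : Fin N, ((υ : ℝ) * (s l : ℝ) * (1 - (m : ℝ) / υ)) ^ k l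
        = (1 - (m : ℝ) / υ) ^ m * ((υ : ℝ) ^ m * P) := by
      simp_rw [mul_pow]
      rw [Finset.prod_mul_distrib, Finset.prod_mul_distrib,
        Finset.prod_pow_eq_pow_sum, Finset.prod_pow_eq_pow_sum, hk, hP]
      ring
    linarith [heq ▸ hprod]
  have key : (1 / 2 : ℝ) * (P / (S : ℝ) ^ m) ≤ F / D := by
    have hre : (1 / 2 : ℝ) * (P / (S : ℝ) ^ m) = P / (2 * (S : ℝ) ^ m) := by ring
    rw [hre, div_le_div_iff₀ (by positivity) hD0]
    have h1 : P * D ≤ P * ((υ : ℝ) * (S : ℝ)) ^ m :=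
      mul_le_mul_of_nonneg_left hD_le hP0
    have h2 : (1 - (m : ℝ) / υ) ^ m * ((υ : ℝ) ^ m * P) * (2 * (S : ℝ) ^ m)
        ≤ F * (2 * (S : ℝ) ^ m) :=
      mul_le_mul_of_nonneg_right hF_ge (by positivity)
    have hX : (0 : ℝ) ≤ ((υ : ℝ) ^ m * P) * (S : ℝ) ^ m :=
      mul_nonneg (mul_nonneg (pow_nonneg (le_of_lt hυr) m) hP0)
        (pow_nonneg (le_of_lt hSr) m)
    have h3 : ((υ : ℝ) ^ m * P) * (S : ℝ) ^ m
        ≤ 2 * (1 - (m : ℝ) / υ) ^ m * (((υ : ℝ) ^ m * P) * (S : ℝ) ^ m) := by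
      have := mul_le_mul_of_nonneg_right hBern hX
      linarith
    calc P * D ≤ P * ((υ : ℝ) * (S : ℝ)) ^ m := h1
      _ = ((υ : ℝ) ^ m * P) * (S : ℝ) ^ m := by rw [mul_pow]; ring
      _ ≤ 2 * (1 - (m : ℝ) / υ) ^ m * (((υ : ℝ) ^ m * P) * (S : ℝ) ^ m) := h3
      _ = (1 - (m : ℝ) / υ) ^ m * ((υ : ℝ) ^ m * P) * (2 * (S : ℝ) ^ m) := by ring
      _ ≤ F * (2 * (S : ℝ) ^ m) := h2
  rw [div_div_eq_mul_div]
  calc (1 / 2 : ℝ) * ((m.factorial : ℝ) * ((P / (S : ℝ) ^ m) / K))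
      = ((m.factorial : ℝ) / K) * ((1 / 2 : ℝ) * (P / (S : ℝ) ^ m)) := by ring
    _ ≤ ((m.factorial : ℝ) / K) * (F / D) :=
        mul_le_mul_of_nonneg_left key (by positivity)
    _ = F / K * (m.factorial : ℝ) / D := by ring
end

section
/- Let $\mathcal{H}$ be a Hilbert space, $D\colon\mathcal{H}\to\ell^2(J)$ the analysis operator of a frame with $\|D\|, \|D^{-1}\| \le \sqrt{\kappa_2}$, $\Delta \subseteq J$ finite, and $\mathcal{W} = R(D^*P_\Delta) + R(D^{-1}P_\Delta)$ with orthogonal projection $P_\mathcal{W}$. Then for every $g\in\mathcal{H}$, $\|g\|_{\mathcal{H}} \le \|P_\mathcal{W} g\|_{\mathcal{H}} + \sqrt{\kappa_2}\, \|P_\Delta^\perp D g\|_{\ell^1(J)}$, where we use the identity $P_\mathcal{W}^\perp g = P_\mathcal{W}^\perp D^{-1} P_\Delta^\perp D g$ (valid since $D^{-1}D = I$ and $R(D^{-1}P_\Delta)\subseteq\mathcal{W}$). -/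
open scoped ENNReal


/-- Splitting estimate: with `D` the analysis operator of a frame, `D⁻¹` a left inverse,
`‖D‖, ‖D⁻¹‖ ≤ √κ₂`, `Δ ⊆ J` finite and `W = R(D^* P_Δ) + R(D⁻¹ P_Δ)`, every `g ∈ H`
satisfies `‖g‖ ≤ ‖P_W g‖ + √κ₂ ‖P_Δ^⊥ D g‖₁` (the `ℓ¹` norm possibly infinite). -/
theorem norm_le_proj_add_tail
    {H : Type*} [NormedAddCommGroup H] [InnerProductSpace ℂ H] [CompleteSpace H]
    {J : Type*} (κ₂ : ℝ) (hκ₂ : 1 ≤ κ₂)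
    (D : H →L[ℂ] lp (fun _ : J => ℂ) 2)
    (Dinv : lp (fun _ : J => ℂ) 2 →L[ℂ] H)
    (hleft : Dinv.comp D = ContinuousLinearMap.id ℂ H)
    (hD : ‖D‖ ≤ Real.sqrt κ₂) (hDinv : ‖Dinv‖ ≤ Real.sqrt κ₂)
    (Δ : Finset J) (W : Submodule ℂ H) [CompleteSpace W]
    (hW : W = Submodule.span ℂ
      {y : H | ∃ x : lp (fun _ : J => ℂ) 2, (∀ j ∉ Δ, x j = 0) ∧
        (y = ContinuousLinearMap.adjoint D x ∨ y = Dinv x)}) :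
    ∀ g : H,
      ENNReal.ofReal ‖g‖ ≤
        ENNReal.ofReal ‖(W.orthogonalProjectionOnto g : H)‖ +
          ENNReal.ofReal (Real.sqrt κ₂) *
            ∑' j : {j : J // j ∉ Δ}, ENNReal.ofReal ‖D g j.1‖ := by
  intro g
  classical
  have hsqrt1 : (1 : ℝ) ≤ Real.sqrt κ₂ := Real.one_le_sqrt.mpr hκ₂
  have hsqrt0 : (0 : ℝ) ≤ Real.sqrt κ₂ := Real.sqrt_nonneg _
  by_cases htop : (∑' j : {j : J // j ∉ Δ}, ENNReal.ofReal ‖D g j.1‖) = ⊤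
  · rw [htop, ENNReal.mul_top]
    · simp
    · simp only [ne_eq, ENNReal.ofReal_eq_zero, not_le]
      linarith
  -- the tail is summable
  have hsumm : Summable (fun j : {j : J // j ∉ Δ} => ‖D g j.1‖) := by
    have := ENNReal.summable_toReal htop
    simpa [ENNReal.toReal_ofReal (norm_nonneg _)] using this
  -- the cut-off function
  set f : J → ℂ := fun j => if j ∈ Δ then 0 else D g j with hfdef
  have hf_norm : ∀ j : J, ‖f j‖ = if j ∈ Δ then 0 else ‖D g j‖ := by
    intro j; by_cases h : j ∈ Δ <;> simp [hfdef, h]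
  have hsummf : Summable (fun j : J => ‖f j‖) := by
    rw [← Finset.summable_compl_iff (s := Δ)]
    refine hsumm.congr fun j => ?_
    rw [hf_norm j.1, if_neg j.2]
  have hf1 : Memℓp f 1 := memℓp_gen (by simpa using hsummf)
  have hf2 : Memℓp f 2 := hf1.of_exponent_ge (by norm_num)
  set y : lp (fun _ : J => ℂ) 2 := ⟨f, hf2⟩ with hydef
  set C : ℝ := ∑' j : {j : J // j ∉ Δ}, ‖D g j.1‖ with hCdef
  have hC0 : 0 ≤ C := tsum_nonneg fun _ => norm_nonneg _
  have hCfull : C = ∑' j : J, ‖f j‖ := by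
    rw [hCdef]
    rw [show (∑' j : J, ‖f j‖) =
        ∑' j : ({j : J | j ∉ Δ} : Set J), ‖f j.1‖ from
      (tsum_subtype_eq_of_support_subset (by
        intro j hj
        simp only [Function.mem_support, hf_norm j] at hj
        by_contra h
        simp only [Set.mem_setOf_eq, not_not] at h
        rw [if_pos h] at hj
        exact hj rfl)).symm]
    refine tsum_congr fun j => ?_
    rw [hf_norm j.1, if_neg j.2]
  -- ℓ² norm of y is bounded by C
  have hynorm : ‖y‖ ≤ C := by
    refine lp.norm_le_of_forall_sum_le (by norm_num) hC0 fun s => ?_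
    have hterm : ∀ i ∈ s, ‖f i‖ ^ ((2 : ℝ≥0∞).toReal) ≤ ‖f i‖ * C := by
      intro i _
      have h1 : ‖f i‖ ≤ C := by
        rw [hCfull]; exact hsummf.le_tsum i fun _ _ => norm_nonneg _
      have : ‖f i‖ ^ ((2 : ℝ≥0∞).toReal) = ‖f i‖ * ‖f i‖ := by
        rw [show ((2 : ℝ≥0∞).toReal) = (2 : ℝ) by norm_num,
          Real.rpow_two]; ring
      rw [this]
      exact mul_le_mul_of_nonneg_left h1 (norm_nonneg _)
    calc ∑ i ∈ s, ‖(y : ∀ _ : J, ℂ) i‖ ^ ((2 : ℝ≥0∞).toReal)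
        ≤ ∑ i ∈ s, ‖f i‖ * C := Finset.sum_le_sum hterm
      _ = (∑ i ∈ s, ‖f i‖) * C := by rw [Finset.sum_mul]
      _ ≤ C * C := by
          refine mul_le_mul_of_nonneg_right ?_ hC0
          rw [hCfull]
          exact hsummf.sum_le_tsum s (fun _ _ => norm_nonneg _)
      _ = C ^ ((2 : ℝ≥0∞).toReal) := by
          rw [show ((2 : ℝ≥0∞).toReal) = (2 : ℝ) by norm_num, Real.rpow_two]
          ring
  -- the element Dinv (D g - y) belongs to W
  have hxΔ : ∀ j ∉ Δ, (D g - y) j = 0 := by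
    intro j hj
    have : (D g - y) j = D g j - y j := rfl
    rw [this, hydef]
    show D g j - f j = 0
    rw [hfdef]; simp [hj]
  have haW : Dinv (D g - y) ∈ W := by
    rw [hW]
    exact Submodule.subset_span ⟨D g - y, hxΔ, Or.inr rfl⟩
  have hg : g = Dinv (D g - y) + Dinv y := by
    have : Dinv (D g) = g := by
      have := congrArg (fun T => T g) hleft
      simpa using this
    rw [map_sub]; rw [this]; abel
  -- decompose the projection
  have hproj : (W.orthogonalProjectionOnto g : H) =
      Dinv (D g - y) + (W.orthogonalProjectionOnto (Dinv y) : H) := by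
    conv_lhs => rw [hg]
    rw [map_add, Submodule.coe_add,
      ← Submodule.starProjection_apply, Submodule.starProjection_eq_self_iff.mpr haW]
  have hkey : g - (W.orthogonalProjectionOnto g : H) =
      Dinv y - (W.orthogonalProjectionOnto (Dinv y) : H) := by
    rw [hproj]
    nth_rewrite 1 [hg]
    abel
  have hperp : ‖g - (W.orthogonalProjectionOnto g : H)‖ ≤ ‖Dinv y‖ := by
    rw [hkey]
    have := Submodule.starProjection_minimal (U := W) (Dinv y)
    rw [Submodule.starProjection_apply] at this
    rw [this]
    exact ciInf_le_of_le ⟨0, fun x hx => by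
      obtain ⟨w, rfl⟩ := hx; positivity⟩ ⟨0, W.zero_mem⟩ (by simp)
  have hreal : ‖g‖ ≤ ‖(W.orthogonalProjectionOnto g : H)‖ + Real.sqrt κ₂ * C := by
    calc ‖g‖ = ‖(W.orthogonalProjectionOnto g : H) + (g - (W.orthogonalProjectionOnto g : H))‖ := by
          congr 1; abel
      _ ≤ ‖(W.orthogonalProjectionOnto g : H)‖ + ‖g - (W.orthogonalProjectionOnto g : H)‖ :=
          norm_add_le _ _
      _ ≤ ‖(W.orthogonalProjectionOnto g : H)‖ + Real.sqrt κ₂ * C := by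
          refine add_le_add le_rfl ?_
          refine hperp.trans ?_
          calc ‖Dinv y‖ ≤ ‖Dinv‖ * ‖y‖ := Dinv.le_opNorm y
            _ ≤ Real.sqrt κ₂ * C :=
                mul_le_mul hDinv hynorm (norm_nonneg _) hsqrt0
  -- convert to ENNReal
  have hofC : ENNReal.ofReal C = ∑' j : {j : J // j ∉ Δ}, ENNReal.ofReal ‖D g j.1‖ :=
    ENNReal.ofReal_tsum_of_nonneg (fun _ => norm_nonneg _) hsumm
  calc ENNReal.ofReal ‖g‖
      ≤ ENNReal.ofReal (‖(W.orthogonalProjectionOnto g : H)‖ + Real.sqrt κ₂ * C) :=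
        ENNReal.ofReal_le_ofReal hreal
    _ = ENNReal.ofReal ‖(W.orthogonalProjectionOnto g : H)‖ +
        ENNReal.ofReal (Real.sqrt κ₂) * ENNReal.ofReal C := by
        rw [ENNReal.ofReal_add (norm_nonneg _) (by positivity),
          ENNReal.ofReal_mul hsqrt0]
    _ = _ := by rw [hofC]
end
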